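/- arXiv:1105.4638 — 5 statements merged into one kernel-verified Lean document; each statement's English description precedes it below -/
import Mathlib

section
/- In a free group, the centralizer of every nontrivial element is an infinite cyclic subgroup. -/
open FreeGroup

private lemma reduce_cons_eq' {β : Type*} [DecidableEq β] {w : List (β × Bool)}
    (hw : FreeGroup.reduce w = w) (p : β × Bool)
    (hp : ∀ q ∈ w.head?, ¬(p.1 = q.1 ∧ p.2 = !q.2)) :
    FreeGroup.reduce (p :: w) = p :: w := by
  rw [FreeGroup.reduce.cons, hw]
  cases w with
  | nil => rfl
  | cons q t =>
    show (if p.1 = q.1 ∧ p.2 = !q.2 then t else p :: q :: t) = p :: q :: t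
    exact if_neg (hp q rfl)

private lemma reduce_append_eq' {β : Type*} [DecidableEq β] {w : List (β × Bool)}
    (hw : FreeGroup.reduce w = w) (p : β × Bool)
    (hp : ∀ q ∈ w.getLast?, ¬(p.1 = q.1 ∧ p.2 = !q.2)) :
    FreeGroup.reduce (w ++ [p]) = w ++ [p] := by
  have hinv : invRev (w ++ [p]) = (p.1, !p.2) :: invRev w := by
    simp [invRev]
  have hredw : FreeGroup.reduce (invRev w) = invRev w := by
    rw [reduce_invRev, hw]
  have hhead : ∀ q ∈ (invRev w).head?, ¬((p.1, !p.2).1 = q.1 ∧ (p.1, !p.2).2 = !q.2) := by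
    intro q hq
    have hh : (invRev w).head? = (w.getLast?).map (fun g : β × Bool => (g.1, !g.2)) := by
      rw [invRev, List.head?_reverse, List.getLast?_map]
    rw [Option.mem_def, hh] at hq
    obtain ⟨q0, hq0, rfl⟩ := Option.map_eq_some_iff.mp hq
    rintro ⟨h1, h2⟩
    refine hp q0 hq0 ⟨h1, ?_⟩
    revert h2
    cases hp2 : p.2 <;> cases hq02 : q0.2 <;> simp
  have key := reduce_cons_eq' hredw (p.1, !p.2) hhead
  rw [← hinv, reduce_invRev] at key
  exact invRev_injective key

private lemma freeGroup_center_eq_one {β : Type*} {a b : β} (hab : a ≠ b)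
    {z : FreeGroup β} (hz : ∀ s : FreeGroup β, s * z = z * s) : z = 1 := by
  classical
  by_contra h1
  have hw : z.toWord ≠ [] := fun h => h1 (toWord_eq_nil_iff.mp h)
  obtain ⟨q, t, hqt⟩ := List.exists_cons_of_ne_nil hw
  set x : β := if q.1 = a then b else a with hx
  have hxq : x ≠ q.1 := by
    by_cases hqa : q.1 = a
    · simpa [hx, hqa] using hab.symm
    · simpa [hx, hqa] using fun h => hqa h.symm
  set l : β × Bool := z.toWord.getLast hw with hl
  set u : Bool := if l.1 = x then l.2 else true with hu
  have hlast : ∀ q' ∈ z.toWord.getLast?, ¬((x, u).1 = q'.1 ∧ (x, u).2 = !q'.2) := by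
    intro q' hq'
    have : q' = l := by
      rw [Option.mem_def, List.getLast?_eq_getLast hw] at hq'
      exact (Option.some_injective _ hq').symm
    subst this
    rintro ⟨h1, h2⟩
    simp only at h1 h2
    rw [hu, if_pos (h1.symm ▸ rfl : l.1 = x)] at h2
    exact (Bool.eq_not_self l.2).mp h2
  have hhead : ∀ q' ∈ z.toWord.head?, ¬((x, u).1 = q'.1 ∧ (x, u).2 = !q'.2) := by
    intro q' hq'
    rw [Option.mem_def, hqt] at hq'
    rintro ⟨h1, -⟩
    exact hxq ((Option.some_injective _ hq') ▸ h1)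
  have hred : FreeGroup.reduce z.toWord = z.toWord := reduce_toWord z
  have h2 : (FreeGroup.mk [(x, u)] * z).toWord = (x, u) :: z.toWord := by
    conv_lhs => rw [← mk_toWord (x := z)]
    rw [mul_mk, toWord_mk]
    exact reduce_cons_eq' hred _ hhead
  have h3 : (z * FreeGroup.mk [(x, u)]).toWord = z.toWord ++ [(x, u)] := by
    conv_lhs => rw [← mk_toWord (x := z)]
    rw [mul_mk, toWord_mk]
    exact reduce_append_eq' hred _ hlast
  have heq : (x, u) :: z.toWord = z.toWord ++ [(x, u)] := by
    rw [← h2, ← h3, hz]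
  have := congrArg List.head? heq
  rw [hqt] at this
  simp at this
  exact hxq (congrArg Prod.fst this)

private lemma freeGroup_isEmpty_eq_one {β : Type*} [IsEmpty β] (x : FreeGroup β) : x = 1 := by
  classical
  apply toWord_eq_nil_iff.mp
  cases h : x.toWord with
  | nil => rfl
  | cons p tl => exact isEmptyElim p.1

private lemma freeGroup_subsingleton_pow {β : Type*} [Subsingleton β] (a₀ : β)
    (x : FreeGroup β) : ∃ n : ℤ, x = FreeGroup.of a₀ ^ n := by
  induction x using FreeGroup.induction_on with
  | C1 => exact ⟨0, by simp⟩
  | of a => exact ⟨1, by rw [Subsingleton.elim a a₀, zpow_one]⟩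
  | inv_of a _ => exact ⟨-1, by rw [Subsingleton.elim a a₀, zpow_neg, zpow_one]⟩
  | mul y z hy hz =>
    obtain ⟨m, rfl⟩ := hy
    obtain ⟨n, rfl⟩ := hz
    exact ⟨m + n, by rw [zpow_add]⟩

private lemma freeGroup_of_zpow_eq_one {β : Type*} (a₀ : β) {n : ℤ}
    (h : (FreeGroup.of a₀ : FreeGroup β) ^ n = 1) : n = 0 := by
  let φ : FreeGroup β →* Multiplicative ℤ :=
    FreeGroup.lift (fun _ => Multiplicative.ofAdd (1 : ℤ))
  have h1 : φ ((FreeGroup.of a₀) ^ n) = 1 := by rw [h, _root_.map_one]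
  rw [_root_.map_zpow, FreeGroup.lift_apply_of] at h1
  have h2 := congrArg Multiplicative.toAdd h1
  simpa using h2

theorem centralizer_of_nontrivial_is_infinite_cyclic {α : Type*}
    (g : FreeGroup α) (hg : g ≠ 1) :
    ∃ r : FreeGroup α, (∀ n : ℤ, r ^ n = 1 → n = 0) ∧
      ∀ s : FreeGroup α, (s * g * s⁻¹ = g ↔ ∃ i : ℤ, s = r ^ i) := by
  classical
  set C := Subgroup.centralizer ({g} : Set (FreeGroup α)) with hC
  have hmem : ∀ s : FreeGroup α, s ∈ C ↔ s * g = g * s := fun s =>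
    Subgroup.mem_centralizer_singleton_iff
  have hconj : ∀ s : FreeGroup α, s * g * s⁻¹ = g ↔ s ∈ C := by
    intro s
    rw [hmem, mul_inv_eq_iff_eq_mul]
  have hgC : g ∈ C := (hmem g).mpr rfl
  haveI : IsFreeGroup C := inferInstance
  set e := IsFreeGroup.mulEquiv C with he
  set z := e.symm ⟨g, hgC⟩ with hzdef
  have hz1 : z ≠ 1 := by
    intro h
    have := congrArg e h
    rw [e.apply_symm_apply, _root_.map_one] at this
    exact hg (congrArg Subtype.val this)
  have hzc : ∀ s, s * z = z * s := by
    intro s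
    apply e.injective
    rw [_root_.map_mul, _root_.map_mul, e.apply_symm_apply]
    ext
    exact (hmem _).mp (e s).2
  haveI hsub : Subsingleton (IsFreeGroup.Generators C) := by
    constructor
    intro a b
    by_contra hab
    exact hz1 (freeGroup_center_eq_one hab hzc)
  have hne : Nonempty (IsFreeGroup.Generators C) := by
    by_contra hempty
    haveI : IsEmpty (IsFreeGroup.Generators C) := not_nonempty_iff.mp hempty
    exact hz1 (freeGroup_isEmpty_eq_one z)
  obtain ⟨a₀⟩ := hne
  set r0 : C := e (FreeGroup.of a₀) with hr0
  refine ⟨(r0 : FreeGroup α), ?_, ?_⟩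
  · intro n hn
    have h1 : r0 ^ n = 1 := by
      apply Subtype.coe_injective
      push_cast
      exact hn
    have h2 : (FreeGroup.of a₀ : FreeGroup (IsFreeGroup.Generators C)) ^ n = 1 := by
      apply e.injective
      rw [_root_.map_zpow, _root_.map_one, ← hr0, h1]
    exact freeGroup_of_zpow_eq_one a₀ h2
  · intro s
    rw [hconj]
    constructor
    · intro hsC
      obtain ⟨i, hi⟩ := freeGroup_subsingleton_pow a₀ (e.symm ⟨s, hsC⟩)
      refine ⟨i, ?_⟩
      have := congrArg e hi
      rw [e.apply_symm_apply, _root_.map_zpow, ← hr0] at this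
      have := congrArg Subtype.val this
      push_cast at this
      exact this
    · rintro ⟨i, rfl⟩
      simpa using (r0 ^ i).2
end

section
/- In a free group, if an element g commutes with h^n for some nonzero integer n and h ≠ 1, then g commutes with h. -/
namespace FGAux
open FreeGroup List

variable {α : Type*} [DecidableEq α]

def R : (α × Bool) → (α × Bool) → Prop := fun x y => ¬(x.1 = y.1 ∧ x.2 = !y.2)

theorem chain'_reduce (L : List (α × Bool)) : List.Chain' R (reduce L) := by
  induction L with
  | nil => simp [reduce, List.Chain']
  | cons x L ih =>
    rw [FreeGroup.reduce.cons]
    rcases hL : reduce L with _ | ⟨hd, tl⟩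
    · simp [List.Chain']
    · rw [hL] at ih
      simp only [List.casesOn]
      by_cases hx : x.1 = hd.1 ∧ x.2 = !hd.2
      · rw [if_pos hx]; exact ih.tail
      · rw [if_neg hx]; exact List.isChain_cons_cons.mpr ⟨hx, ih⟩

theorem reduce_eq_self_of_chain' {L : List (α × Bool)} (h : List.Chain' R L) :
    reduce L = L := by
  induction L with
  | nil => simp
  | cons x L ih =>
    have hL : reduce L = L := ih h.tail
    rw [FreeGroup.reduce.cons, hL]
    rcases L with _ | ⟨hd, tl⟩
    · rfl
    · have hR : R x hd := (List.isChain_cons_cons.mp h).1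
      simp only [R] at hR
      simp [if_neg hR]

theorem toWord_mk_eq {L : List (α × Bool)} (h : List.Chain' R L) :
    (FreeGroup.mk L).toWord = L := by
  rw [FreeGroup.toWord_mk, reduce_eq_self_of_chain' h]

theorem norm_mk_eq {L : List (α × Bool)} (h : List.Chain' R L) :
    (FreeGroup.mk L).norm = L.length := by
  rw [FreeGroup.norm, toWord_mk_eq h]

theorem chain'_toWord (x : FreeGroup α) : List.Chain' R x.toWord := by
  conv_rhs => rw [← FreeGroup.reduce_toWord x]
  exact chain'_reduce _

theorem of_eq_mk (a : α) : FreeGroup.of a = FreeGroup.mk [(a, true)] := rfl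

theorem inv_of_eq_mk (a : α) : (FreeGroup.of a)⁻¹ = FreeGroup.mk [(a, false)] := by
  rw [of_eq_mk, FreeGroup.inv_mk]
  congr 1

theorem eq_zpow_of_commute_of (a : α) :
    ∀ (m : ℕ) (x : FreeGroup α), x.norm = m → x * FreeGroup.of a = FreeGroup.of a * x →
    ∃ k : ℤ, x = FreeGroup.of a ^ k := by
  intro m
  induction m using Nat.strong_induction_on with
  | _ m IH =>
  intro x hm hcom
  rcases x.toWord.eq_nil_or_concat' with hnil | ⟨w', ⟨b, tb⟩, hw⟩
  · exact ⟨0, by simpa using FreeGroup.toWord_eq_nil_iff.mp hnil⟩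
  have hchain : List.Chain' R x.toWord := chain'_toWord x
  have hchainw' : List.Chain' R w' := by
    rw [hw] at hchain
    exact (List.isChain_append.mp hchain).1
  have hxeq : x = FreeGroup.mk w' * FreeGroup.mk [(b, tb)] := by
    conv_lhs => rw [← FreeGroup.mk_toWord (x := x)]
    rw [hw, ← FreeGroup.mul_mk]
  have hmlen : m = w'.length + 1 := by
    rw [← hm, FreeGroup.norm, hw, List.length_append, List.length_singleton]
  have hlt : (FreeGroup.mk w').norm < m := by
    rw [norm_mk_eq hchainw', hmlen]; omega
  by_cases hba : b = a
  · subst hba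
    cases tb
    · -- last letter is b⁻¹ ; x * of b is shorter
      have hx' : FreeGroup.mk w' = x * FreeGroup.of b := by
        rw [hxeq, ← inv_of_eq_mk, mul_assoc, inv_mul_cancel, mul_one]
      have hcom' : (FreeGroup.mk w') * FreeGroup.of b = FreeGroup.of b * FreeGroup.mk w' := by
        rw [hx', hcom, mul_assoc, hcom]
      obtain ⟨k, hk⟩ := IH _ hlt _ rfl hcom'
      refine ⟨k - 1, ?_⟩
      have : x = FreeGroup.mk w' * (FreeGroup.of b)⁻¹ := by
        rw [hx', mul_assoc, mul_inv_cancel, mul_one]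
      rw [this, hk, ← zpow_sub_one]
    · -- last letter is b ; x * (of b)⁻¹ is shorter
      have hx' : FreeGroup.mk w' = x * (FreeGroup.of b)⁻¹ := by
        rw [hxeq, ← of_eq_mk, mul_assoc, mul_inv_cancel, mul_one]
      have hcom' : (FreeGroup.mk w') * FreeGroup.of b = FreeGroup.of b * FreeGroup.mk w' := by
        rw [hx', mul_assoc, inv_mul_cancel, mul_one, ← mul_assoc, ← hcom, mul_assoc,
          mul_inv_cancel, mul_one]
      obtain ⟨k, hk⟩ := IH _ hlt _ rfl hcom'
      refine ⟨k + 1, ?_⟩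
      have : x = FreeGroup.mk w' * FreeGroup.of b := by
        rw [hx', mul_assoc, inv_mul_cancel, mul_one]
      rw [this, hk, ← zpow_add_one]
  · exfalso
    have hlast : x.toWord.getLast? = some (b, tb) := by
      rw [hw, List.getLast?_concat]
    have h1 : x * FreeGroup.of a = FreeGroup.mk (x.toWord ++ [(a, true)]) := by
      conv_lhs => rw [← FreeGroup.mk_toWord (x := x)]
      rw [of_eq_mk, FreeGroup.mul_mk]
    have chain1 : List.Chain' R (x.toWord ++ [(a, true)]) := by
      refine List.isChain_append.mpr ⟨hchain, List.isChain_singleton _, ?_⟩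
      intro p hp q hq
      rw [hlast, Option.mem_some_iff] at hp
      simp only [List.head?_cons, Option.mem_some_iff] at hq
      subst hp; subst hq
      exact fun hc => hba hc.1
    have t1 : (x * FreeGroup.of a).toWord = x.toWord ++ [(a, true)] := by
      rw [h1, toWord_mk_eq chain1]
    obtain ⟨hd, t, hw2⟩ : ∃ hd t, x.toWord = hd :: t := by
      rcases hw3 : x.toWord with _ | ⟨hd, t⟩
      · rw [hw3] at hw; exact absurd hw (by simp)
      · exact ⟨hd, t, rfl⟩
    have h2 : FreeGroup.of a * x = FreeGroup.mk ((a, true) :: x.toWord) := by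
      conv_lhs => rw [← FreeGroup.mk_toWord (x := x)]
      rw [of_eq_mk, FreeGroup.mul_mk, List.singleton_append]
    by_cases hhd : R (a, true) hd
    · have chain2 : List.Chain' R ((a, true) :: x.toWord) := by
        rw [hw2]
        exact List.isChain_cons_cons.mpr ⟨hhd, by rw [← hw2]; exact hchain⟩
      have t2 : (FreeGroup.of a * x).toWord = (a, true) :: x.toWord := by
        rw [h2, toWord_mk_eq chain2]
      have heq : x.toWord ++ [(a, true)] = (a, true) :: x.toWord := by
        rw [← t1, ← t2, hcom]
      have hL : (x.toWord ++ [(a, true)]).getLast? = some (a, true) := List.getLast?_concat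
      rw [heq] at hL
      rw [hw, ← List.cons_append, List.getLast?_concat] at hL
      exact hba (congrArg Prod.fst (Option.some_inj.mp hL))
    · have hhd' : hd = (a, false) := by
        simp only [R, not_not] at hhd
        obtain ⟨h1', h2'⟩ := hhd
        have : hd.2 = false := by
          cases hb2 : hd.2
          · rfl
          · rw [hb2] at h2'; simp at h2'
        ext
        · exact h1'.symm
        · rw [this]
      have h3 : FreeGroup.of a * x = FreeGroup.mk t := by
        rw [h2, hw2, hhd']
        exact Quot.sound (FreeGroup.Red.Step.cons_not (x := a) (b := true))
      have chaint : List.Chain' R t := by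
        rw [hw2] at hchain; exact hchain.tail
      have t2 : (FreeGroup.of a * x).toWord = t := by rw [h3, toWord_mk_eq chaint]
      have hlen2 : x.toWord.length = t.length + 1 := by rw [hw2, List.length_cons]
      have : (x * FreeGroup.of a).toWord.length = (FreeGroup.of a * x).toWord.length := by
        rw [hcom]
      rw [t1, t2, List.length_append, List.length_singleton] at this
      omega

theorem commute_with_of (a : α) (x : FreeGroup α)
    (h : x * FreeGroup.of a = FreeGroup.of a * x) : ∃ k : ℤ, x = FreeGroup.of a ^ k :=
  eq_zpow_of_commute_of a x.norm x rfl h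

theorem cyc_pow_ne_one {L : List (α × Bool)} (hL : List.Chain' R L) (hne : L ≠ [])
    (hjunc : ∀ p ∈ L.getLast?, ∀ q ∈ L.head?, R p q) :
    ∀ m : ℕ, 0 < m → (FreeGroup.mk L) ^ m ≠ 1 := by
  have key : ∀ m : ℕ, 0 < m → ∃ K, (FreeGroup.mk L) ^ m = FreeGroup.mk K ∧
      List.Chain' R K ∧ K.getLast? = L.getLast? ∧ K.head? = L.head? ∧ K ≠ [] := by
    intro m hm
    induction m with
    | zero => omega
    | succ m ih =>
      rcases Nat.eq_zero_or_pos m with hm0 | hm0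
      · exact ⟨L, by rw [hm0, pow_one], hL, rfl, rfl, hne⟩
      · obtain ⟨K, hK1, hK2, hK3, hK4, hK5⟩ := ih hm0
        refine ⟨K ++ L, ?_, ?_, ?_, ?_, ?_⟩
        · rw [pow_succ, hK1, FreeGroup.mul_mk]
        · refine List.isChain_append.mpr ⟨hK2, hL, ?_⟩
          intro p hp q hq
          rw [hK3] at hp
          exact hjunc p hp q hq
        · rw [List.getLast?_append]
          rcases List.eq_nil_or_concat' L with h | ⟨L', c, hc⟩
          · exact absurd h hne
          · rw [hc, List.getLast?_concat]; rfl
        · rw [List.head?_append, hK4]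
          obtain ⟨hd, t, ht⟩ := List.exists_cons_of_ne_nil hne
          rw [ht]
          rfl
        · simp [hK5]
  intro m hm hcon
  obtain ⟨K, hK1, hK2, _, _, hK5⟩ := key m hm
  rw [hK1] at hcon
  have : (FreeGroup.mk K).toWord = [] := by rw [hcon, FreeGroup.toWord_one]
  rw [toWord_mk_eq hK2] at this
  exact hK5 this

theorem pow_ne_one : ∀ (N : ℕ) (x : FreeGroup α), x.norm = N → x ≠ 1 →
    ∀ m : ℕ, 0 < m → x ^ m ≠ 1 := by
  intro N
  induction N using Nat.strong_induction_on with
  | _ N IH =>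
  intro x hN hx m hm
  have hxw : x = FreeGroup.mk x.toWord := (FreeGroup.mk_toWord).symm
  have hne : x.toWord ≠ [] := fun hc => hx (FreeGroup.toWord_eq_nil_iff.mp hc)
  have hchain : List.Chain' R x.toWord := chain'_toWord x
  by_cases hjunc : ∀ p ∈ x.toWord.getLast?, ∀ q ∈ x.toWord.head?, R p q
  · rw [hxw]
    exact cyc_pow_ne_one hchain hne hjunc m hm
  · push_neg at hjunc
    obtain ⟨p, hp, q, hq, hpq⟩ := hjunc
    obtain ⟨hd, t, hw2⟩ := List.exists_cons_of_ne_nil hne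
    obtain ⟨w', c, hw⟩ : ∃ w' c, x.toWord = w' ++ [c] := by
      rcases List.eq_nil_or_concat' x.toWord with h | ⟨w', c, hc⟩
      · exact absurd h hne
      · exact ⟨w', c, hc⟩
    have hq' : q = hd := by
      rw [hw2] at hq; simp at hq; exact hq.symm
    have hp' : p = c := by
      rw [hw, List.getLast?_concat] at hp; simp at hp; exact hp.symm
    rw [hp', hq'] at hpq
    simp only [R, not_not] at hpq
    have hc2 : c = (hd.1, !hd.2) := by
      ext
      · exact hpq.1
      · rw [hpq.2]
    -- t is nonempty
    have htne : t ≠ [] := by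
      intro ht0
      rw [ht0] at hw2
      rw [hw2] at hw
      have : c = hd := by
        have := hw
        rcases w' with _ | ⟨a', w''⟩
        · simpa using this.symm
        · exfalso
          have hlen := congrArg List.length hw
          simp at hlen
      rw [this] at hc2
      have : hd.2 = !hd.2 := congrArg Prod.snd hc2
      simp at this
    obtain ⟨t', ht⟩ : ∃ t', t = t' ++ [c] := by
      obtain ⟨t'', c', hc'⟩ : ∃ t'' c', t = t'' ++ [c'] := by
        rcases List.eq_nil_or_concat' t with h | ⟨t'', c', hc'⟩
        · exact absurd h htne
        · exact ⟨t'', c', hc'⟩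
      refine ⟨t'', ?_⟩
      have : x.toWord = (hd :: t'') ++ [c'] := by rw [hw2, hc']; simp
      rw [this, List.getLast?_concat] at hp
      have : c' = c := by simp at hp; exact hp.trans hp'
      rw [hc', this]
    have hxdecomp : x = FreeGroup.mk [hd] * FreeGroup.mk t' * (FreeGroup.mk [hd])⁻¹ := by
      have h1 : (FreeGroup.mk [hd])⁻¹ = FreeGroup.mk [c] := by
        rw [FreeGroup.inv_mk, hc2]
        congr 1
      rw [h1, FreeGroup.mul_mk, FreeGroup.mul_mk]
      conv_lhs => rw [hxw, hw2, ht]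
      simp
    have hchaint' : List.Chain' R t' := by
      have : List.Chain' R (t' ++ [c]) := by
        rw [← ht]
        rw [hw2] at hchain
        exact hchain.tail
      exact (List.isChain_append.mp this).1
    have hnormt' : (FreeGroup.mk t').norm = t'.length := norm_mk_eq hchaint'
    have hlt : t'.length < N := by
      have : x.norm = x.toWord.length := rfl
      rw [hw2, ht] at this
      simp only [List.length_cons, List.length_append, List.length_singleton] at this
      omega
    have hyne : FreeGroup.mk t' ≠ 1 := by
      intro hy1
      apply hx
      rw [hxdecomp, hy1, mul_one, mul_inv_cancel]
    have hrec := IH t'.length hlt (FreeGroup.mk t') hnormt' hyne m hm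
    intro hcon
    apply hrec
    have hconj : ∀ k : ℕ, (FreeGroup.mk [hd] * FreeGroup.mk t' * (FreeGroup.mk [hd])⁻¹) ^ k
        = FreeGroup.mk [hd] * (FreeGroup.mk t') ^ k * (FreeGroup.mk [hd])⁻¹ := by
      intro k
      induction k with
      | zero => group
      | succ k ih => rw [pow_succ, ih, pow_succ]; group
    have hx' : x ^ m = FreeGroup.mk [hd] * (FreeGroup.mk t') ^ m * (FreeGroup.mk [hd])⁻¹ := by
      rw [hxdecomp, hconj]
    rw [hx'] at hcon
    calc (FreeGroup.mk t') ^ m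
        = (FreeGroup.mk [hd])⁻¹ *
          (FreeGroup.mk [hd] * (FreeGroup.mk t') ^ m * (FreeGroup.mk [hd])⁻¹) *
          FreeGroup.mk [hd] := by group
      _ = 1 := by rw [hcon]; group

theorem zpow_ne_one {x : FreeGroup α} (hx : x ≠ 1) {n : ℤ} (hn : n ≠ 0) : x ^ n ≠ 1 := by
  rcases lt_trichotomy n 0 with h | h | h
  · intro hcon
    have h1 : x ^ (-n) = 1 := by
      rw [zpow_neg, hcon, inv_one]
    have h2 : x ^ (-n).toNat ≠ 1 := pow_ne_one x.norm x rfl hx _ (by omega)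
    apply h2
    rw [← zpow_natCast, Int.toNat_of_nonneg (by omega)]
    exact h1
  · exact absurd h hn
  · intro hcon
    have h2 : x ^ n.toNat ≠ 1 := pow_ne_one x.norm x rfl hx _ (by omega)
    apply h2
    rw [← zpow_natCast, Int.toNat_of_nonneg (by omega)]
    exact hcon

end FGAux

open FGAux in
theorem freeGroup_comm_of_center {β : Type*} (z : FreeGroup β) (hz : z ≠ 1)
    (hcen : ∀ x : FreeGroup β, x * z = z * x) (x y : FreeGroup β) : x * y = y * x := by
  classical
  by_cases hsub : ∀ a b : β, a = b
  · rcases isEmpty_or_nonempty β with hβ | ⟨⟨c⟩⟩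
    · have htriv : ∀ u : FreeGroup β, u = 1 := by
        intro u
        have h1 : (Subgroup.closure (Set.range (FreeGroup.of : β → FreeGroup β))) = ⊤ :=
          FreeGroup.closure_range_of β
        have h2 : (Set.range (FreeGroup.of : β → FreeGroup β)) = ∅ := by
          simp [Set.range_eq_empty]
        rw [h2, Subgroup.closure_empty] at h1
        have : u ∈ (⊥ : Subgroup (FreeGroup β)) := h1 ▸ Subgroup.mem_top u
        simpa using this
      rw [htriv x, htriv y]
    · have htop : (⊤ : Subgroup (FreeGroup β)) ≤ Subgroup.zpowers (FreeGroup.of c) := by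
        rw [← FreeGroup.closure_range_of]
        apply (Subgroup.closure_le _).mpr
        rintro _ ⟨d, rfl⟩
        rw [hsub d c]
        exact Subgroup.mem_zpowers _
      obtain ⟨i, hi⟩ := htop (Subgroup.mem_top x)
      obtain ⟨j, hj⟩ := htop (Subgroup.mem_top y)
      rw [← hi, ← hj]
      exact (Commute.zpow_zpow (Commute.refl _) i j).eq
  · push_neg at hsub
    obtain ⟨a, b, hab⟩ := hsub
    obtain ⟨j, hj⟩ := commute_with_of a z (hcen (FreeGroup.of a)).symm
    obtain ⟨k, hk⟩ := commute_with_of b z (hcen (FreeGroup.of b)).symm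
    exfalso
    set ψ : FreeGroup β →* Multiplicative ℤ :=
      FreeGroup.lift (fun c => if c = b then Multiplicative.ofAdd (1 : ℤ) else 1) with hψ
    have e1 : ψ z = 1 := by
      rw [hj, map_zpow, hψ, FreeGroup.lift_apply_of, if_neg hab, one_zpow]
    have e2 : ψ z = Multiplicative.ofAdd k := by
      rw [hk, map_zpow, hψ, FreeGroup.lift_apply_of, if_pos rfl, ← ofAdd_zsmul, smul_eq_mul, mul_one]
    have hk0 : k = 0 := by
      have := e1.symm.trans e2
      simpa using this.symm
    rw [hk0, zpow_zero] at hk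
    exact hz hk

theorem isFreeGroup_comm {G : Type*} [Group G] [IsFreeGroup G] (z : G) (hz : z ≠ 1)
    (hcen : ∀ x : G, x * z = z * x) (x y : G) : x * y = y * x := by
  let e := IsFreeGroup.toFreeGroup G
  have hz' : e z ≠ 1 := by
    intro hc
    exact hz (by simpa using e.injective (by simpa using hc))
  have hcen' : ∀ w : FreeGroup (IsFreeGroup.Generators G), w * e z = e z * w := by
    intro w
    have := hcen (e.symm w)
    have h2 := congrArg e this
    simpa using h2
  have := freeGroup_comm_of_center (e z) hz' hcen' (e x) (e y)
  apply e.injective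
  simpa using this

theorem commute_of_commute_pow {α : Type*}
    (g h : FreeGroup α) (hh : h ≠ 1) (n : ℤ) (hn : n ≠ 0)
    (hc : g * h ^ n = h ^ n * g) :
    g * h = h * g := by
  classical
  set u := h ^ n with hu
  have hu1 : u ≠ 1 := FGAux.zpow_ne_one hh hn
  set C := Subgroup.centralizer ({u} : Set (FreeGroup α)) with hC
  have hgC : g ∈ C := by
    rw [hC, Subgroup.mem_centralizer_iff]
    rintro y (rfl : y = u)
    exact hc.symm
  have hhC : h ∈ C := by
    rw [hC, Subgroup.mem_centralizer_iff]
    rintro y (rfl : y = u)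
    rw [hu, ← zpow_add_one, ← zpow_one_add, add_comm]
  have huC : u ∈ C := by
    rw [hC, Subgroup.mem_centralizer_iff]
    rintro y (rfl : y = u)
    rfl
  have hz : (⟨u, huC⟩ : C) ≠ 1 := by
    intro hcontra
    exact hu1 (congrArg Subtype.val hcontra)
  have hcen : ∀ x : C, x * ⟨u, huC⟩ = ⟨u, huC⟩ * x := by
    rintro ⟨x, hx⟩
    apply Subtype.ext
    exact (Subgroup.mem_centralizer_iff.mp hx u rfl).symm
  have := isFreeGroup_comm (⟨u, huC⟩ : C) hz hcen ⟨g, hgC⟩ ⟨h, hhC⟩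
  exact congrArg Subtype.val this
end

section
/- In a free group, if two powers of the same nontrivial element are conjugate, then the exponents are equal: if x ≠ 1 and u * x^p * u⁻¹ = x^q for integers p, q, then p = q. -/
open Finset

namespace ConjPowAux

open scoped Classical

variable {α : Type*} [DecidableEq α]

abbrev R (α : Type*) := MonoidAlgebra ℚ (FreeMonoid α)

/-- squarefree words -/
def Sq (m : FreeMonoid α) : Prop := List.Chain' (· ≠ ·) (FreeMonoid.toList m)

lemma mul_apply_take (f g : R α) (m : FreeMonoid α) :
    (f * g).coeff m = ∑ i ∈ range ((FreeMonoid.toList m).length + 1),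
      f.coeff (.ofList ((FreeMonoid.toList m).take i)) * g.coeff (.ofList ((FreeMonoid.toList m).drop i)) := by
  classical
  set s : Finset (FreeMonoid α × FreeMonoid α) :=
    (range ((FreeMonoid.toList m).length + 1)).image
      (fun i => (FreeMonoid.ofList ((FreeMonoid.toList m).take i),
        FreeMonoid.ofList ((FreeMonoid.toList m).drop i))) with hs_def
  have hs : ∀ {p : FreeMonoid α × FreeMonoid α}, p ∈ s ↔ p.1 * p.2 = m := by
    intro p
    constructor
    · intro hp
      simp only [hs_def, mem_image, mem_range] at hp
      obtain ⟨i, _, rfl⟩ := hp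
      show FreeMonoid.ofList _ * FreeMonoid.ofList _ = m
      rw [← FreeMonoid.ofList_append, List.take_append_drop]
      exact FreeMonoid.ofList_toList m
    · intro hp
      have hm : FreeMonoid.toList m = FreeMonoid.toList p.1 ++ FreeMonoid.toList p.2 := by
        rw [← hp]; rfl
      simp only [hs_def, mem_image, mem_range]
      refine ⟨(FreeMonoid.toList p.1).length, ?_, ?_⟩
      · rw [hm, List.length_append]; omega
      · rw [hm, List.take_left, List.drop_left]
        exact Prod.ext (FreeMonoid.ofList_toList p.1) (FreeMonoid.ofList_toList p.2)
  rw [MonoidAlgebra.mul_apply_antidiagonal f g m s hs, hs_def, Finset.sum_image]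
  intro i hi j hj hij
  have h1 := congrArg (fun p : FreeMonoid α × FreeMonoid α => (FreeMonoid.toList p.1).length) hij
  simp only [FreeMonoid.toList_ofList, List.length_take] at h1
  simp only [Finset.coe_range, Set.mem_Iio, Nat.lt_succ_iff] at hi hj
  omega

omit [DecidableEq α] in
lemma Sq.take {m : FreeMonoid α} (hm : Sq m) (i : ℕ) :
    Sq (FreeMonoid.ofList ((FreeMonoid.toList m).take i)) := by
  unfold Sq at *
  rw [FreeMonoid.toList_ofList]
  have := (List.take_append_drop i (FreeMonoid.toList m)) ▸ hm
  exact (List.isChain_append.mp this).1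

omit [DecidableEq α] in
lemma Sq.drop {m : FreeMonoid α} (hm : Sq m) (i : ℕ) :
    Sq (FreeMonoid.ofList ((FreeMonoid.toList m).drop i)) := by
  unfold Sq at *
  rw [FreeMonoid.toList_ofList]
  have := (List.take_append_drop i (FreeMonoid.toList m)) ▸ hm
  exact (List.isChain_append.mp this).2.1

/-- the congruence identifying ring elements with equal coefficients on squarefree words -/
def sqCon (α : Type*) [DecidableEq α] : RingCon (R α) where
  r f g := ∀ m, Sq m → f.coeff m = g.coeff m
  iseqv := ⟨fun _ _ _ => rfl, fun h m hm => (h m hm).symm, fun h h' m hm => (h m hm).trans (h' m hm)⟩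
  add' := fun {w x y z} h h' m hm => by
    rw [MonoidAlgebra.coeff_add w y, MonoidAlgebra.coeff_add x z, Finsupp.add_apply, Finsupp.add_apply, h m hm, h' m hm]
  mul' := fun {_ _ _ _} h h' m hm => by
    rw [mul_apply_take, mul_apply_take]
    refine Finset.sum_congr rfl fun i _ => ?_
    rw [h _ (Sq.take hm i), h' _ (Sq.drop hm i)]

abbrev Q (α : Type*) [DecidableEq α] := (sqCon α).Quotient

lemma Q.ind {motive : Q α → Prop} (h : ∀ f : R α, motive (f : Q α)) : ∀ z, motive z :=
  fun z => Quotient.inductionOn z h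

noncomputable def qcoeff (m : FreeMonoid α) (z : Q α) : ℚ :=
  Quotient.liftOn z (fun f => if Sq m then f.coeff m else 0)
    (fun f g h => by
      by_cases hm : Sq m
      · rw [if_pos hm, if_pos hm]; exact h m hm
      · rw [if_neg hm, if_neg hm])

lemma qcoeff_coe (m : FreeMonoid α) (f : R α) :
    qcoeff m (f : Q α) = if Sq m then f.coeff m else 0 := rfl

lemma qcoeff_not_sq {m : FreeMonoid α} (hm : ¬ Sq m) (z : Q α) : qcoeff m z = 0 := by
  induction z using Q.ind with | h f => rw [qcoeff_coe, if_neg hm]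

lemma qcoeff_add (m : FreeMonoid α) (z w : Q α) :
    qcoeff m (z + w) = qcoeff m z + qcoeff m w := by
  induction z using Q.ind with | h f =>
  induction w using Q.ind with | h g =>
  rw [← RingCon.coe_add, qcoeff_coe, qcoeff_coe, qcoeff_coe]
  by_cases hm : Sq m
  · rw [if_pos hm, if_pos hm, if_pos hm, MonoidAlgebra.coeff_add, Finsupp.add_apply]
  · simp [hm]

lemma qcoeff_sub (m : FreeMonoid α) (z w : Q α) :
    qcoeff m (z - w) = qcoeff m z - qcoeff m w := by
  induction z using Q.ind with | h f =>
  induction w using Q.ind with | h g =>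
  rw [← RingCon.coe_sub, qcoeff_coe, qcoeff_coe, qcoeff_coe]
  by_cases hm : Sq m
  · rw [if_pos hm, if_pos hm, if_pos hm, MonoidAlgebra.coeff_sub, Finsupp.sub_apply]
  · simp [hm]

omit [DecidableEq α] in
lemma Sq_one : Sq (1 : FreeMonoid α) := List.isChain_nil

lemma qcoeff_one (m : FreeMonoid α) :
    qcoeff m (1 : Q α) = if m = 1 then 1 else 0 := by
  rw [← RingCon.coe_one, qcoeff_coe]
  by_cases hm : Sq m
  · rw [if_pos hm, MonoidAlgebra.one_def, MonoidAlgebra.coeff_single, Finsupp.single_apply]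
    by_cases h1 : m = 1
    · simp [h1]
    · rw [if_neg h1, if_neg (fun h => h1 h.symm)]
  · rw [if_neg hm, if_neg ?_]
    intro h; subst h; exact hm Sq_one

lemma qcoeff_mul {m : FreeMonoid α} (hm : Sq m) (z w : Q α) :
    qcoeff m (z * w) = ∑ i ∈ range ((FreeMonoid.toList m).length + 1),
      qcoeff (.ofList ((FreeMonoid.toList m).take i)) z *
      qcoeff (.ofList ((FreeMonoid.toList m).drop i)) w := by
  induction z using Q.ind with | h f =>
  induction w using Q.ind with | h g =>
  rw [← RingCon.coe_mul, qcoeff_coe, if_pos hm, mul_apply_take]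
  refine Finset.sum_congr rfl fun i _ => ?_
  rw [qcoeff_coe, qcoeff_coe, if_pos (Sq.take hm i), if_pos (Sq.drop hm i)]

end ConjPowAux
namespace ConjPowAux

open scoped Classical

variable {α : Type*} [DecidableEq α]

omit [DecidableEq α] in
lemma Sq_of (a : α) : Sq (FreeMonoid.of a) := List.isChain_singleton a

noncomputable def X (a : α) : Q α := ((MonoidAlgebra.single (FreeMonoid.of a) 1 : R α) : Q α)

lemma qcoeff_X (m : FreeMonoid α) (a : α) :
    qcoeff m (X a) = if m = FreeMonoid.of a then 1 else 0 := by
  rw [X, qcoeff_coe]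
  by_cases hm : Sq m
  · rw [if_pos hm, MonoidAlgebra.coeff_single, Finsupp.single_apply]
    by_cases h1 : m = FreeMonoid.of a
    · simp [h1]
    · rw [if_neg h1, if_neg (fun h => h1 h.symm)]
  · rw [if_neg hm, if_neg ?_]
    intro h; subst h; exact hm (Sq_of a)

lemma X_mul_X (a : α) : X a * X a = 0 := by
  rw [X, ← RingCon.coe_mul, ← RingCon.coe_zero]
  rw [MonoidAlgebra.single_mul_single]
  refine (RingCon.eq _).mpr fun m hm => ?_
  rw [MonoidAlgebra.coeff_single, Finsupp.single_apply]
  rw [if_neg ?_]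
  · rfl
  · intro h
    subst h
    have : List.Chain' (· ≠ ·) [a, a] := hm
    replace this := List.isChain_cons_cons.mp this
    exact this.1 rfl

noncomputable def U (a : α) : (Q α)ˣ where
  val := 1 + X a
  inv := 1 - X a
  val_inv := by
    rw [add_mul, one_mul, mul_sub, mul_one, X_mul_X, sub_zero, sub_add_cancel]
  inv_val := by
    rw [sub_mul, one_mul, mul_add, mul_one, X_mul_X, add_zero, add_sub_cancel_right]

noncomputable def phi : FreeGroup α →* (Q α)ˣ := FreeGroup.lift (fun a => U a)

noncomputable def P (L : List (α × Bool)) : Q α :=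
  (L.map (fun ℓ : α × Bool => if ℓ.2 then 1 + X ℓ.1 else 1 - X ℓ.1)).prod

lemma phi_mk (L : List (α × Bool)) :
    ((phi (FreeGroup.mk L) : (Q α)ˣ) : Q α) = P L := by
  rw [phi, FreeGroup.lift_mk, P]
  calc (((L.map fun x => cond x.2 (U x.1) (U x.1)⁻¹).prod : (Q α)ˣ) : Q α)
      = ((L.map fun x => cond x.2 (U x.1) (U x.1)⁻¹).map (Units.coeHom (Q α))).prod :=
        map_list_prod (Units.coeHom (Q α)) _
    _ = (L.map (fun ℓ : α × Bool => if ℓ.2 then 1 + X ℓ.1 else 1 - X ℓ.1)).prod := by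
        rw [List.map_map]
        refine congrArg List.prod (List.map_congr_left fun ℓ _ => ?_)
        cases hb : ℓ.2 <;>
          simp only [Function.comp, hb, cond_false, cond_true, if_false, if_true] <;> rfl

end ConjPowAux
namespace ConjPowAux

open scoped Classical

variable {α : Type*} [DecidableEq α]

omit [DecidableEq α] in
lemma ofList_eq_one_iff {w : List α} : FreeMonoid.ofList w = 1 ↔ w = [] := by
  constructor
  · intro h; have := congrArg FreeMonoid.toList h; simpa using this
  · rintro rfl; rfl

omit [DecidableEq α] in
lemma ofList_inj {w w' : List α} : FreeMonoid.ofList w = FreeMonoid.ofList w' ↔ w = w' := by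
  constructor
  · intro h; have := congrArg FreeMonoid.toList h; simpa using this
  · rintro rfl; rfl

def sgn (s : Bool) : ℚ := if s then 1 else -1

def F : List (α × Bool) → List α → ℚ
  | [], [] => 1
  | [], _ :: _ => 0
  | _ :: L, [] => F L []
  | ℓ :: L, b :: m' => F L (b :: m') + if b = ℓ.1 then sgn ℓ.2 * F L m' else 0

@[simp] lemma F_nil_nil : F ([] : List (α × Bool)) ([] : List α) = 1 := rfl
@[simp] lemma F_nil_cons (b : α) (m : List α) : F ([] : List (α × Bool)) (b :: m) = 0 := rfl
@[simp] lemma F_cons_nil (ℓ : α × Bool) (L : List (α × Bool)) : F (ℓ :: L) [] = F L [] := rfl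
lemma F_cons_cons (ℓ : α × Bool) (L : List (α × Bool)) (b : α) (m' : List α) :
    F (ℓ :: L) (b :: m') = F L (b :: m') + if b = ℓ.1 then sgn ℓ.2 * F L m' else 0 := rfl

@[simp] lemma F_const (L : List (α × Bool)) : F L [] = 1 := by
  induction L with
  | nil => rfl
  | cons ℓ L ih => rw [F_cons_nil, ih]

lemma qcoeff_fac (ℓ : α × Bool) (w : List α) (hw : List.Chain' (· ≠ ·) w) :
    qcoeff (.ofList w) (if ℓ.2 then 1 + X ℓ.1 else 1 - X ℓ.1) =
      if w = [] then 1 else if w = [ℓ.1] then sgn ℓ.2 else 0 := by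
  have h1 : qcoeff (FreeMonoid.ofList w) (1 : Q α) = if w = [] then 1 else 0 := by
    rw [qcoeff_one]
    by_cases h : w = [] <;> simp [h, ofList_eq_one_iff]
  have h2 : qcoeff (FreeMonoid.ofList w) (X ℓ.1) = if w = [ℓ.1] then 1 else 0 := by
    rw [qcoeff_X]
    have : FreeMonoid.ofList w = FreeMonoid.of ℓ.1 ↔ w = [ℓ.1] := ofList_inj
    by_cases h : w = [ℓ.1] <;> simp [h, this]
  rcases ℓ with ⟨la, ls⟩
  cases ls
  · show qcoeff (FreeMonoid.ofList w) ((1 : Q α) - X la) = _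
    rw [qcoeff_sub, h1, h2]
    by_cases h : w = []
    · subst h; simp [sgn]
    · by_cases h' : w = [la] <;> simp [h, h', sgn]
  · show qcoeff (FreeMonoid.ofList w) ((1 : Q α) + X la) = _
    rw [qcoeff_add, h1, h2]
    by_cases h : w = []
    · subst h; simp [sgn]
    · by_cases h' : w = [la] <;> simp [h, h', sgn]

lemma qcoeff_P (L : List (α × Bool)) :
    ∀ m : List α, List.Chain' (· ≠ ·) m →
      qcoeff (FreeMonoid.ofList m) (P L) = F L m := by
  induction L with
  | nil =>
    intro m _
    show qcoeff (FreeMonoid.ofList m) (1 : Q α) = F [] m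
    rw [qcoeff_one]
    cases m with
    | nil => simp
    | cons b m' => simp [ofList_eq_one_iff]
  | cons ℓ L ih =>
    intro m hm
    have hP : P (ℓ :: L) = (if ℓ.2 then 1 + X ℓ.1 else 1 - X ℓ.1) * P L := by
      rw [P, List.map_cons, List.prod_cons]; rfl
    have hsq : Sq (FreeMonoid.ofList m) := by
      show List.Chain' _ (FreeMonoid.toList (FreeMonoid.ofList m))
      rw [FreeMonoid.toList_ofList]; exact hm
    rw [hP, qcoeff_mul hsq, FreeMonoid.toList_ofList]
    cases m with
    | nil =>
      rw [show ([] : List α).length + 1 = 1 from rfl, Finset.sum_range_one]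
      simp only [List.take_nil, List.drop_nil]
      rw [qcoeff_fac ℓ [] List.isChain_nil, if_pos rfl, one_mul, ih [] List.isChain_nil]
      simp
    | cons b m' =>
      rw [List.length_cons, Finset.sum_range_succ']
      have hf0 : qcoeff (FreeMonoid.ofList ((b :: m').take 0)) (if ℓ.2 then 1 + X ℓ.1 else 1 - X ℓ.1)
          * qcoeff (FreeMonoid.ofList ((b :: m').drop 0)) (P L) = F L (b :: m') := by
        rw [List.take_zero, List.drop_zero, qcoeff_fac ℓ [] List.isChain_nil, if_pos rfl, one_mul]
        exact ih _ hm
      have hrest : ∑ i ∈ Finset.range (m'.length + 1),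
          qcoeff (FreeMonoid.ofList ((b :: m').take (i+1))) (if ℓ.2 then 1 + X ℓ.1 else 1 - X ℓ.1)
          * qcoeff (FreeMonoid.ofList ((b :: m').drop (i+1))) (P L)
          = if b = ℓ.1 then sgn ℓ.2 * F L m' else 0 := by
        rw [Finset.sum_eq_single 0]
        · simp only [List.take_succ_cons, List.take_zero, List.drop_succ_cons, List.drop_zero]
          rw [qcoeff_fac ℓ [b] (List.isChain_singleton b), if_neg (by simp), ih m' hm.tail]
          by_cases hb : b = ℓ.1
          · rw [if_pos hb, if_pos (by rw [hb]), mul_comm]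
          · rw [if_neg hb, if_neg (by simpa using hb), zero_mul]
        · intro i hi hi0
          simp only [List.take_succ_cons, List.drop_succ_cons]
          have hchain : List.Chain' (· ≠ ·) (b :: m'.take i) := by
            have : b :: m'.take i = (b :: m').take (i+1) := by simp
            rw [this]
            have h2 := (List.take_append_drop (i+1) (b :: m')) ▸ hm
            exact (List.isChain_append.mp h2).1
          simp only [Finset.mem_range] at hi
          rw [qcoeff_fac ℓ (b :: m'.take i) hchain, if_neg (by simp), if_neg ?_, zero_mul]
          intro hcon
          have hlen := congrArg List.length hcon
          have hmin : min i m'.length = i := min_eq_left (by omega)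
          simp only [List.length_cons, List.length_take, List.length_nil, hmin] at hlen
          omega
        · intro h0
          exact absurd (Finset.mem_range.mpr (by omega)) h0
      rw [hrest, hf0, F_cons_cons, add_comm]

end ConjPowAux
namespace ConjPowAux

open scoped Classical

variable {α : Type*} [DecidableEq α]

def dd : List α → List α
  | [] => []
  | [a] => [a]
  | a :: b :: l => if a = b then dd (b :: l) else a :: dd (b :: l)

@[simp] lemma dd_nil : dd ([] : List α) = [] := rfl
@[simp] lemma dd_singleton (a : α) : dd [a] = [a] := rfl
lemma dd_cons_cons (a b : α) (l : List α) :
    dd (a :: b :: l) = if a = b then dd (b :: l) else a :: dd (b :: l) := rfl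

lemma dd_cons (a : α) (l : List α) : ∃ t, dd (a :: l) = a :: t := by
  induction l generalizing a with
  | nil => exact ⟨[], rfl⟩
  | cons b l ih =>
    rw [dd_cons_cons]
    by_cases h : a = b
    · subst h
      obtain ⟨t, ht⟩ := ih a
      exact ⟨t, by rw [if_pos rfl, ht]⟩
    · exact ⟨dd (b :: l), by rw [if_neg h]⟩

lemma dd_chain (l : List α) : List.Chain' (· ≠ ·) (dd l) := by
  induction l with
  | nil => exact List.isChain_nil
  | cons a l ih =>
    cases l with
    | nil => exact List.isChain_singleton a
    | cons b l' =>
      rw [dd_cons_cons]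
      by_cases h : a = b
      · rw [if_pos h]; exact ih
      · rw [if_neg h]
        obtain ⟨t, ht⟩ := dd_cons b l'
        rw [ht] at ih ⊢
        exact List.isChain_cons_cons.mpr ⟨h, ih⟩

/-- the key vanishing lemma: `F L w = 0` for alternating words `w` that are
longer than the number of blocks, or of equal length but starting with the wrong letter. -/
lemma AB (L : List (α × Bool)) :
    (∀ w : List α, w.Chain' (· ≠ ·) → (dd (L.map Prod.fst)).length < w.length → F L w = 0) ∧
    (∀ b w', (b :: w').Chain' (· ≠ ·) → (dd (L.map Prod.fst)).length = (b :: w').length →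
      (∀ a s L₀, L = (a, s) :: L₀ → b ≠ a) → F L (b :: w') = 0) := by
  induction L with
  | nil =>
    constructor
    · intro w _ hlt
      cases w with
      | nil => simp at hlt
      | cons c w' => simp
    · intro b w' _ hlen _
      simp at hlen
  | cons ℓ L' ih =>
    obtain ⟨la, ls⟩ := ℓ
    obtain ⟨IA, IB⟩ := ih
    cases L' with
    | nil =>
      constructor
      · intro w hw hlt
        simp only [List.map_cons, List.map_nil, dd_singleton, List.length_singleton] at hlt
        cases w with
        | nil => simp at hlt
        | cons c w' =>
          cases w' with
          | nil => simp at hlt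
          | cons c2 w'' =>
            rw [F_cons_cons, F_nil_cons]
            by_cases hc : c = la
            · rw [if_pos hc, F_nil_cons]; ring
            · rw [if_neg hc]; ring
      · intro b w' hw hlen hhead
        have hb : b ≠ la := hhead la ls [] rfl
        simp only [List.map_cons, List.map_nil, dd_singleton, List.length_singleton,
          List.length_cons] at hlen
        cases w' with
        | nil => rw [F_cons_cons, F_nil_cons, if_neg hb]; ring
        | cons _ _ => simp at hlen
    | cons ℓ' L'' =>
      obtain ⟨b0, s0⟩ := ℓ'
      have hmap : ((la, ls) :: (b0, s0) :: L'').map Prod.fst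
          = la :: b0 :: L''.map Prod.fst := rfl
      have hmap' : ((b0, s0) :: L'').map Prod.fst = b0 :: L''.map Prod.fst := rfl
      by_cases hb0 : b0 = la
      · -- first two letters equal
        have hdd : dd (((la, ls) :: (b0, s0) :: L'').map Prod.fst)
            = dd (((b0, s0) :: L'').map Prod.fst) := by
          rw [hmap, hmap', dd_cons_cons, if_pos hb0.symm]
        constructor
        · intro w hw hlt
          rw [hdd] at hlt
          cases w with
          | nil => simp at hlt
          | cons c w' =>
            have hw2 : List.Chain' (· ≠ ·) w' := hw.tail
            rw [F_cons_cons, IA _ hw hlt]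
            by_cases hc : c = la
            · rw [if_pos hc]
              have hlen' : (dd (((b0, s0) :: L'').map Prod.fst)).length ≤ w'.length := by
                simp only [List.length_cons] at hlt; omega
              rcases lt_or_eq_of_le hlen' with hlt' | heq'
              · rw [IA _ hw2 hlt']; ring
              · -- w' has length exactly k'; w' nonempty since k' ≥ 1
                obtain ⟨t, ht⟩ := dd_cons b0 (L''.map Prod.fst)
                cases w' with
                | nil =>
                  rw [hmap', ht] at heq'; simp at heq'
                | cons c2 w'' =>
                  rw [IB c2 w'' hw2 heq' ?_]
                  · ring
                  · rintro a' s' L₀ heqL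
                    injection heqL with h1 h2
                    injection h1 with h1a h1b
                    have hcc2 : c ≠ c2 := (List.isChain_cons_cons.mp hw).1
                    rw [← h1a]
                    exact fun hh => hcc2 (hc.trans (hb0.symm.trans hh.symm))
            · rw [if_neg hc]; ring
        · intro b w' hw hlen hhead
          have hb : b ≠ la := hhead la ls _ rfl
          rw [hdd] at hlen
          rw [F_cons_cons, if_neg hb, IB b w' hw hlen ?_]
          · ring
          · rintro a' s' L₀ heqL
            injection heqL with h1 h2
            injection h1 with h1a h1b
            rw [← h1a, hb0]
            exact hb
      · -- first two letters distinct
        have hdd : dd (((la, ls) :: (b0, s0) :: L'').map Prod.fst)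
            = la :: dd (((b0, s0) :: L'').map Prod.fst) := by
          rw [hmap, hmap', dd_cons_cons, if_neg (fun h => hb0 h.symm)]
        constructor
        · intro w hw hlt
          rw [hdd, List.length_cons] at hlt
          cases w with
          | nil => simp at hlt
          | cons c w' =>
            have hw2 : List.Chain' (· ≠ ·) w' := hw.tail
            simp only [List.length_cons] at hlt
            rw [F_cons_cons, IA _ hw (by simp only [List.length_cons]; omega)]
            by_cases hc : c = la
            · rw [if_pos hc, IA _ hw2 (by omega)]; ring
            · rw [if_neg hc]; ring
        · intro b w' hw hlen hhead
          have hb : b ≠ la := hhead la ls _ rfl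
          rw [hdd, List.length_cons, List.length_cons] at hlen
          rw [F_cons_cons, if_neg hb, IA _ hw (by simp only [List.length_cons]; omega)]
          ring

end ConjPowAux
namespace ConjPowAux

open scoped Classical

variable {α : Type*} [DecidableEq α]

def Red' (L : List (α × Bool)) : Prop :=
  List.Chain' (fun p q : α × Bool => p.1 = q.1 → p.2 = q.2) L

lemma red'_of_reduce (L : List (α × Bool)) : Red' (FreeGroup.reduce L) := by
  induction L with
  | nil => exact List.isChain_nil
  | cons x L ih =>
    rw [FreeGroup.reduce.cons]
    rcases h : FreeGroup.reduce L with _ | ⟨hd, tl⟩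
    · exact List.isChain_singleton x
    · rw [h] at ih
      dsimp only
      split_ifs with hc
      · exact ih.tail
      · refine List.isChain_cons_cons.mpr ⟨?_, ih⟩
        intro heq
        by_contra hne
        apply hc
        refine ⟨heq, ?_⟩
        cases hx : x.2 <;> cases hh : hd.2 <;> simp_all

lemma INV (L : List (α × Bool)) (hL : Red' L) :
    F L (dd (L.map Prod.fst)).tail ≠ 0 ∧
    ∀ a s L', L = (a, s) :: L' → ∃ n : ℕ,
      F L (dd (L.map Prod.fst)) = ((n : ℚ) + 1) * sgn s * F L (dd (L.map Prod.fst)).tail := by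
  induction L with
  | nil =>
    constructor
    · simp
    · rintro a s L' ⟨⟩
  | cons ℓ L' ih =>
    obtain ⟨la, ls⟩ := ℓ
    have hL' : Red' L' := hL.tail
    obtain ⟨IH1, IH2⟩ := ih hL'
    cases L' with
    | nil =>
      constructor
      · simp
      · rintro a s L₀ heq
        injection heq with h1 h2
        injection h1 with h1a h1b
        subst h1a h1b h2
        refine ⟨0, ?_⟩
        simp only [List.map_cons, List.map_nil, dd_singleton]
        rw [F_cons_cons, F_nil_cons, if_pos rfl, F_nil_nil, List.tail_cons, F_cons_nil, F_nil_nil]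
        ring
    | cons ℓ' L'' =>
      obtain ⟨b0, s0⟩ := ℓ'
      have hmap : ((la, ls) :: (b0, s0) :: L'').map Prod.fst
          = la :: b0 :: L''.map Prod.fst := rfl
      have hmap' : ((b0, s0) :: L'').map Prod.fst = b0 :: L''.map Prod.fst := rfl
      obtain ⟨n', hn'⟩ := IH2 b0 s0 L'' rfl
      obtain ⟨t, ht⟩ := dd_cons b0 (L''.map Prod.fst)
      rw [← hmap'] at ht
      by_cases hb0 : b0 = la
      · -- merged block
        have hs0 : s0 = ls := by
          have hrel := (List.isChain_cons_cons.mp hL).1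
          exact (hrel (by rw [hb0])).symm
        have hdd : dd (((la, ls) :: (b0, s0) :: L'').map Prod.fst)
            = dd (((b0, s0) :: L'').map Prod.fst) := by
          rw [hmap, hmap', dd_cons_cons, if_pos hb0.symm]
        -- dd of L' is b0 :: t, and b0 = la
        have htail : (dd (((b0, s0) :: L'').map Prod.fst)).tail = t := by rw [ht]; rfl
        -- value of F L on tail t
        have hFtail : F ((la, ls) :: (b0, s0) :: L'') t = F ((b0, s0) :: L'') t := by
          cases t with
          | nil => simp
          | cons c t' =>
            have hchain := dd_chain (((b0, s0) :: L'').map Prod.fst)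
            rw [ht] at hchain
            have hcb : b0 ≠ c := (List.isChain_cons_cons.mp hchain).1
            rw [F_cons_cons, if_neg (fun hh : c = la => hcb (by rw [hb0, ← hh]))]
            ring
        have hFdd : F ((la, ls) :: (b0, s0) :: L'') (dd (((b0, s0) :: L'').map Prod.fst))
            = F ((b0, s0) :: L'') (dd (((b0, s0) :: L'').map Prod.fst))
              + sgn ls * F ((b0, s0) :: L'') t := by
          rw [ht, F_cons_cons, if_pos hb0]
        constructor
        · rw [hdd, htail, hFtail]
          rw [htail] at IH1
          exact IH1
        · rintro a s L₀ heq
          injection heq with h1 h2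
          injection h1 with h1a h1b
          subst h1a h1b
          refine ⟨n' + 1, ?_⟩
          rw [hdd, htail, hFtail, hFdd]
          rw [htail] at hn'
          rw [hn', hs0]
          push_cast
          ring
      · -- new block
        have hdd : dd (((la, ls) :: (b0, s0) :: L'').map Prod.fst)
            = la :: dd (((b0, s0) :: L'').map Prod.fst) := by
          rw [hmap, hmap', dd_cons_cons, if_neg (fun h => hb0 h.symm)]
        have hFdd' : F ((la, ls) :: (b0, s0) :: L'') (dd (((b0, s0) :: L'').map Prod.fst))
            = F ((b0, s0) :: L'') (dd (((b0, s0) :: L'').map Prod.fst)) := by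
          rw [ht, F_cons_cons, if_neg (fun hh : b0 = la => hb0 hh)]
          ring
        constructor
        · rw [hdd, List.tail_cons, hFdd', hn']
          have hsgn : sgn s0 ≠ 0 := by cases s0 <;> simp [sgn]
          have : ((n' : ℚ) + 1) ≠ 0 := by positivity
          exact mul_ne_zero (mul_ne_zero this hsgn) IH1
        · rintro a s L₀ heq
          injection heq with h1 h2
          injection h1 with h1a h1b
          subst h1a h1b
          refine ⟨0, ?_⟩
          rw [hdd, List.tail_cons, hFdd']
          have hzero : F ((b0, s0) :: L'')
              (la :: dd (((b0, s0) :: L'').map Prod.fst)) = 0 := by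
            refine (AB _).1 _ ?_ (by simp)
            have hch := dd_chain (((la, ls) :: (b0, s0) :: L'').map Prod.fst)
            rw [hdd] at hch
            exact hch
          rw [F_cons_cons, hzero, if_pos rfl]
          ring

lemma F_dd_ne_zero (L : List (α × Bool)) (hL : Red' L) (hne : L ≠ []) :
    F L (dd (L.map Prod.fst)) ≠ 0 := by
  obtain ⟨IH1, IH2⟩ := INV L hL
  cases L with
  | nil => exact absurd rfl hne
  | cons ℓ L' =>
    obtain ⟨la, ls⟩ := ℓ
    obtain ⟨n, hn⟩ := IH2 la ls L' rfl
    rw [hn]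
    have hsgn : sgn ls ≠ 0 := by cases ls <;> simp [sgn]
    have h1 : ((n : ℚ) + 1) ≠ 0 := by positivity
    exact mul_ne_zero (mul_ne_zero h1 hsgn) IH1

end ConjPowAux
namespace ConjPowAux

open scoped Classical

variable {α : Type*} [DecidableEq α]

def Vlow (D : ℕ) (z : Q α) : Prop :=
  ∀ m : FreeMonoid α, (FreeMonoid.toList m).length < D → qcoeff m z = 0

lemma mulV_right_lt {D : ℕ} {b : Q α} (hb : Vlow D b) (z : Q α) :
    ∀ m : FreeMonoid α, (FreeMonoid.toList m).length < D → qcoeff m (z * b) = 0 := by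
  intro m hm
  by_cases hsq : Sq m
  · rw [qcoeff_mul hsq]
    refine Finset.sum_eq_zero fun i _ => ?_
    rw [hb _ ?_, mul_zero]
    rw [FreeMonoid.toList_ofList, List.length_drop]
    omega
  · exact qcoeff_not_sq hsq _

lemma mulV_right_eq {D : ℕ} {b : Q α} (hb : Vlow D b) (z : Q α) {m0 : FreeMonoid α}
    (hm0 : Sq m0) (hlen : (FreeMonoid.toList m0).length = D) :
    qcoeff m0 (z * b) = qcoeff 1 z * qcoeff m0 b := by
  rw [qcoeff_mul hm0]
  rw [Finset.sum_eq_single 0]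
  · rw [List.take_zero, List.drop_zero, FreeMonoid.ofList_toList]; rfl
  · intro i hi hi0
    simp only [Finset.mem_range] at hi
    rw [hb _ ?_, mul_zero]
    rw [FreeMonoid.toList_ofList, List.length_drop]
    omega
  · intro h0
    exact absurd (Finset.mem_range.mpr (by omega)) h0

lemma mulV_left_lt {D : ℕ} {y : Q α} (hy : Vlow D y) (z : Q α) :
    ∀ m : FreeMonoid α, (FreeMonoid.toList m).length < D → qcoeff m (y * z) = 0 := by
  intro m hm
  by_cases hsq : Sq m
  · rw [qcoeff_mul hsq]
    refine Finset.sum_eq_zero fun i _ => ?_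
    rw [hy _ ?_, zero_mul]
    rw [FreeMonoid.toList_ofList, List.length_take]
    omega
  · exact qcoeff_not_sq hsq _

lemma mulV_left_eq {D : ℕ} {y : Q α} (hy : Vlow D y) (z : Q α) {m0 : FreeMonoid α}
    (hm0 : Sq m0) (hlen : (FreeMonoid.toList m0).length = D) :
    qcoeff m0 (y * z) = qcoeff m0 y * qcoeff 1 z := by
  rw [qcoeff_mul hm0]
  rw [Finset.sum_eq_single ((FreeMonoid.toList m0).length)]
  · rw [List.take_length, List.drop_length, FreeMonoid.ofList_toList]; rfl
  · intro i hi hi0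
    simp only [Finset.mem_range] at hi
    rw [hy _ ?_, zero_mul]
    rw [FreeMonoid.toList_ofList, List.length_take]
    omega
  · intro h0
    exact absurd (Finset.mem_range.mpr (by omega)) h0

lemma pow_coeffs {D : ℕ} (hD : 1 ≤ D) {m0 : FreeMonoid α} (hm0 : Sq m0)
    (hlen : (FreeMonoid.toList m0).length = D) {b : Q α} (hbV : Vlow D b) {c' : ℚ}
    (hbm : qcoeff m0 b = c') (j : ℕ) :
    qcoeff 1 ((1 + b) ^ j) = 1 ∧
    (∀ m : FreeMonoid α, (FreeMonoid.toList m).length < D → m ≠ 1 →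
      qcoeff m ((1 + b) ^ j) = 0) ∧
    qcoeff m0 ((1 + b) ^ j) = j * c' := by
  have hm0ne1 : m0 ≠ 1 := by
    intro h; rw [h] at hlen; simp [FreeMonoid.toList_one] at hlen; omega
  induction j with
  | zero =>
    refine ⟨?_, ?_, ?_⟩
    · rw [pow_zero, qcoeff_one, if_pos rfl]
    · intro m _ hm1; rw [pow_zero, qcoeff_one, if_neg hm1]
    · rw [pow_zero, qcoeff_one, if_neg hm0ne1]; simp
  | succ j ih =>
    obtain ⟨ih1, ih2, ih3⟩ := ih
    have hexp : (1 + b) ^ (j + 1) = (1 + b) ^ j + (1 + b) ^ j * b := by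
      rw [pow_succ, mul_add, mul_one]
    refine ⟨?_, ?_, ?_⟩
    · rw [hexp, qcoeff_add, ih1, mulV_right_lt hbV _ _ (by simp [FreeMonoid.toList_one]; omega)]
      ring
    · intro m hm hm1
      rw [hexp, qcoeff_add, ih2 m hm hm1, mulV_right_lt hbV _ _ hm]
      ring
    · rw [hexp, qcoeff_add, ih3, mulV_right_eq hbV _ hm0 hlen, ih1, hbm]
      push_cast
      ring

end ConjPowAux
namespace ConjPowAux

open scoped Classical

variable {α : Type*} [DecidableEq α]

lemma const_phi (g : FreeGroup α) : qcoeff 1 ((phi g : (Q α)ˣ) : Q α) = 1 := by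
  have h1 : phi g = phi (FreeGroup.mk (FreeGroup.toWord g)) := by rw [FreeGroup.mk_toWord]
  rw [h1, phi_mk]
  have h2 := qcoeff_P (FreeGroup.toWord g) [] List.isChain_nil
  rw [F_const] at h2
  exact h2

theorem main (x u : FreeGroup α) (hx : x ≠ 1) (p q : ℤ)
    (h : u * x ^ p * u⁻¹ = x ^ q) : p = q := by
  set L := FreeGroup.toWord x with hLdef
  have hLred : Red' L := by
    rw [hLdef, ← FreeGroup.reduce_toWord x]
    exact red'_of_reduce _
  have hLne : L ≠ [] := fun hnil => hx (FreeGroup.toWord_eq_nil_iff.mp hnil)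
  have hmk : FreeGroup.mk L = x := FreeGroup.mk_toWord
  set dL := dd (L.map Prod.fst) with hdLdef
  have hdLne : dL ≠ [] := by
    cases hL : L with
    | nil => exact absurd hL hLne
    | cons ℓ L' =>
      obtain ⟨t0, ht0⟩ := dd_cons ℓ.1 (L'.map Prod.fst)
      rw [hdLdef, hL]
      intro hcon
      rw [show (ℓ :: L').map Prod.fst = ℓ.1 :: L'.map Prod.fst from rfl, ht0] at hcon
      exact List.cons_ne_nil _ _ hcon
  set t : FreeMonoid α := FreeMonoid.ofList dL with htdef
  have htne : t ≠ 1 := fun hcon => hdLne (ofList_eq_one_iff.mp hcon)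
  have hphix : ((phi x : (Q α)ˣ) : Q α) = P L := by rw [← hmk]; exact phi_mk L
  have hcoefft : qcoeff t ((phi x : (Q α)ˣ) : Q α) = F L dL := by
    rw [hphix, htdef]
    exact qcoeff_P L dL (dd_chain _)
  set a : Q α := ((phi x : (Q α)ˣ) : Q α) - 1 with ha
  have hta : qcoeff t a = F L dL := by
    rw [ha, qcoeff_sub, qcoeff_one, if_neg htne, sub_zero, hcoefft]
  have hFne : F L dL ≠ 0 := F_dd_ne_zero L hLred hLne
  -- minimal degree
  set S : Set ℕ := {n | ∃ m : FreeMonoid α, (FreeMonoid.toList m).length = n ∧ qcoeff m a ≠ 0}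
    with hSdef
  have hSne : S.Nonempty := ⟨(FreeMonoid.toList t).length, t, rfl, hta ▸ hFne⟩
  set D := sInf S with hDdef
  have hDS : D ∈ S := Nat.sInf_mem hSne
  obtain ⟨m0, hm0len, hm0ne⟩ := hDS
  have hVa : Vlow D a := by
    intro m hmlt
    by_contra hne
    have hmem : (FreeMonoid.toList m).length ∈ S := ⟨m, rfl, hne⟩
    have := Nat.sInf_le hmem
    omega
  have hconst_a : qcoeff 1 a = 0 := by
    rw [ha, qcoeff_sub, const_phi x, qcoeff_one, if_pos rfl]; ring
  have hD1 : 1 ≤ D := by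
    rcases Nat.eq_zero_or_pos D with h0 | h1
    · exfalso
      have hm0' : m0 = 1 := by
        have h2 : FreeMonoid.toList m0 = [] := by
          rw [← List.length_eq_zero_iff]; omega
        have := congrArg FreeMonoid.ofList h2
        rwa [FreeMonoid.ofList_toList] at this
      rw [hm0'] at hm0ne
      exact hm0ne hconst_a
    · exact h1
  have hm0ne1 : m0 ≠ 1 := by
    intro hcon; rw [hcon] at hm0len; simp [FreeMonoid.toList_one] at hm0len; omega
  have hsqm0 : Sq m0 := by
    by_contra hns
    exact hm0ne (qcoeff_not_sq hns a)
  set c := qcoeff m0 a with hcdef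
  have hc : c ≠ 0 := hm0ne
  -- the inverse
  set a' : Q α := (((phi x)⁻¹ : (Q α)ˣ) : Q α) - 1 with ha'
  have hxval : ((phi x : (Q α)ˣ) : Q α) = 1 + a := by rw [ha]; abel
  have hxinv : (((phi x)⁻¹ : (Q α)ˣ) : Q α) = 1 + a' := by rw [ha']; abel
  have hconst_a' : qcoeff 1 a' = 0 := by
    rw [ha', qcoeff_sub, ← map_inv (phi : FreeGroup α →* (Q α)ˣ), const_phi, qcoeff_one, if_pos rfl]; ring
  have hmul1 : (1 + a) * (1 + a') = (1 : Q α) := by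
    rw [← hxval, ← hxinv, ← Units.val_mul, mul_inv_cancel, Units.val_one]
  have hsplit : ∀ m : FreeMonoid α, qcoeff m a' = - qcoeff m a - qcoeff m (a * a') := by
    intro m
    have hexp : (1 + a) * (1 + a') = 1 + a' + a + a * a' := by noncomm_ring
    have h2 : (1 : Q α) + a' + a + a * a' = 1 := by rw [← hexp, hmul1]
    have h3 := congrArg (qcoeff m) h2
    rw [qcoeff_add, qcoeff_add, qcoeff_add] at h3
    linarith [h3]
  have hVa' : Vlow D a' := by
    intro m hm
    rw [hsplit m, hVa m hm, mulV_left_lt hVa _ _ hm]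
    ring
  have hm0a' : qcoeff m0 a' = -c := by
    rw [hsplit m0, mulV_left_eq hVa _ hsqm0 hm0len, hconst_a', ← hcdef]
    ring
  -- powers of phi x
  have hpows : ∀ P : ℤ, qcoeff 1 (((phi x ^ P : (Q α)ˣ) : Q α)) = 1 ∧
      (∀ m : FreeMonoid α, (FreeMonoid.toList m).length < D → m ≠ 1 →
        qcoeff m (((phi x ^ P : (Q α)ˣ) : Q α)) = 0) ∧
      qcoeff m0 (((phi x ^ P : (Q α)ˣ) : Q α)) = P * c := by
    intro P
    cases P with
    | ofNat n =>
      rw [Int.ofNat_eq_coe, zpow_natCast, Units.val_pow_eq_pow_val, hxval]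
      obtain ⟨h1, h2, h3⟩ := pow_coeffs hD1 hsqm0 hm0len hVa (rfl : qcoeff m0 a = c) n
      refine ⟨h1, h2, ?_⟩
      rw [h3]; push_cast; ring
    | negSucc n =>
      rw [zpow_negSucc, ← inv_pow, Units.val_pow_eq_pow_val, hxinv]
      obtain ⟨h1, h2, h3⟩ := pow_coeffs hD1 hsqm0 hm0len hVa' hm0a' (n + 1)
      refine ⟨h1, h2, ?_⟩
      rw [h3]
      rw [Int.cast_negSucc]
      push_cast
      ring
  -- apply phi to the hypothesis
  have himg : phi u * phi x ^ p * (phi u)⁻¹ = phi x ^ q := by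
    have := congrArg phi h
    simpa [map_mul, map_zpow, map_inv] using this
  have hval : ((phi u : (Q α)ˣ) : Q α) * ((phi x ^ p : (Q α)ˣ) : Q α)
      * (((phi u)⁻¹ : (Q α)ˣ) : Q α) = ((phi x ^ q : (Q α)ˣ) : Q α) := by
    rw [← Units.val_mul, ← Units.val_mul, himg]
  obtain ⟨hp1, hp2, hp3⟩ := hpows p
  obtain ⟨_, _, hq3⟩ := hpows q
  set e : Q α := ((phi u : (Q α)ˣ) : Q α) with he
  set e' : Q α := (((phi u)⁻¹ : (Q α)ˣ) : Q α) with he'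
  set y : Q α := ((phi x ^ p : (Q α)ˣ) : Q α) - 1 with hy
  have hvy : ((phi x ^ p : (Q α)ˣ) : Q α) = 1 + y := by rw [hy]; abel
  have hVy : Vlow D y := by
    intro m hm
    by_cases hm1 : m = 1
    · rw [hy, hm1, qcoeff_sub, hp1, qcoeff_one, if_pos rfl]; ring
    · rw [hy, qcoeff_sub, hp2 m hm hm1, qcoeff_one, if_neg hm1]; ring
  have hym0 : qcoeff m0 y = p * c := by
    rw [hy, qcoeff_sub, hp3, qcoeff_one, if_neg hm0ne1]; ring
  have hee' : e * e' = 1 := by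
    rw [he, he', ← Units.val_mul, mul_inv_cancel, Units.val_one]
  have hlhs : e * ((phi x ^ p : (Q α)ˣ) : Q α) * e' = 1 + e * (y * e') := by
    rw [hvy]
    calc e * (1 + y) * e' = e * e' + e * (y * e') := by noncomm_ring
    _ = 1 + e * (y * e') := by rw [hee']
  have hconst_e : qcoeff 1 e = 1 := const_phi u
  have hconst_e' : qcoeff 1 e' = 1 := by
    rw [he', ← map_inv (phi : FreeGroup α →* (Q α)ˣ)]; exact const_phi u⁻¹
  have hVw : Vlow D (y * e') := mulV_left_lt hVy e'
  have hwm0 : qcoeff m0 (y * e') = p * c := by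
    rw [mulV_left_eq hVy _ hsqm0 hm0len, hym0, hconst_e']
    ring
  have hfinal : qcoeff m0 (e * ((phi x ^ p : (Q α)ˣ) : Q α) * e') = p * c := by
    rw [hlhs, qcoeff_add, qcoeff_one, if_neg hm0ne1,
      mulV_right_eq hVw _ hsqm0 hm0len, hconst_e, hwm0]
    ring
  have : (p : ℚ) * c = q * c := by
    rw [← hfinal, ← hq3]
    rw [he, he'] at hval ⊢
    rw [hval]
  have hpq : (p : ℚ) = q := mul_right_cancel₀ hc this
  exact_mod_cast hpq

end ConjPowAux

theorem conjugate_powers_eq_exponents {α : Type*}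
    (x u : FreeGroup α) (hx : x ≠ 1) (p q : ℤ)
    (h : u * x ^ p * u⁻¹ = x ^ q) :
    p = q := by
  letI := Classical.decEq α
  exact ConjPowAux.main x u hx p q h
end

section
/- In a free group, if (d*c)^n * d = (c*d)^m * c for some integers n and m, then c and d commute. -/
namespace FreeGroupSqAux

open FreeGroup List

variable {α : Type*} [DecidableEq α]

/-- no-cancellation between adjacent letters -/
def NC (a b : α × Bool) : Prop := ¬(a.1 = b.1 ∧ a.2 = !b.2)

lemma reduce_eq_self_of_chain' {L : List (α × Bool)} (h : List.Chain' NC L) :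
    reduce L = L := by
  induction L with
  | nil => rfl
  | cons a L ih =>
    have hL : reduce L = L := ih h.tail
    rw [reduce.cons, hL]
    cases L with
    | nil => rfl
    | cons b L' =>
      have hnc : NC a b := (List.isChain_cons_cons.1 h).1
      simp only [NC] at hnc
      simp [hnc]

lemma chain'_of_reduce_eq_self {L : List (α × Bool)} (h : reduce L = L) :
    List.Chain' NC L := by
  induction L with
  | nil => exact List.isChain_nil
  | cons a L ih =>
    rw [reduce.cons] at h
    rcases hr : reduce L with _ | ⟨b, T⟩
    · rw [hr] at h
      simp only at h
      have : [] = L := by injection h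
      subst this
      exact List.isChain_singleton _
    · rw [hr] at h
      simp only at h
      by_cases hc : a.1 = b.1 ∧ a.2 = !b.2
      · rw [if_pos hc] at h
        exfalso
        have h1 : (reduce L).length ≤ L.length := (reduce.red (L := L)).length_le
        have := congrArg List.length h
        rw [hr] at h1
        simp at this h1
        omega
      · rw [if_neg hc] at h
        have hL : L = b :: T := by
          injection h with _ h2
          exact h2.symm
        subst hL
        exact List.isChain_cons_cons.2 ⟨hc, ih hr⟩

lemma reduce_eq_self_iff {L : List (α × Bool)} :
    reduce L = L ↔ List.Chain' NC L :=
  ⟨chain'_of_reduce_eq_self, reduce_eq_self_of_chain'⟩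

lemma reduce_infix {L M : List (α × Bool)} (h : reduce L = L) (h' : M <:+: L) :
    reduce M = M :=
  reduce_eq_self_of_chain' ((chain'_of_reduce_eq_self h).infix h')

/-- junction compatibility -/
def Compat (L M : List (α × Bool)) : Prop :=
  ∀ a ∈ L.getLast?, ∀ b ∈ M.head?, NC a b

lemma reduce_append_of_compat {L M : List (α × Bool)} (hL : reduce L = L)
    (hM : reduce M = M) (h : Compat L M) : reduce (L ++ M) = L ++ M :=
  reduce_eq_self_of_chain' (List.isChain_append.2
    ⟨chain'_of_reduce_eq_self hL, chain'_of_reduce_eq_self hM, h⟩)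

lemma invRev_append (L M : List (α × Bool)) :
    invRev (L ++ M) = invRev M ++ invRev L := by
  simp [invRev]

lemma invRev_singleton (x : α) (s : Bool) :
    invRev [(x, s)] = [(x, !s)] := by
  simp [invRev]

lemma reduce_append_decomp (n : ℕ) :
    ∀ L M : List (α × Bool), L.length ≤ n → reduce L = L → reduce M = M →
    ∃ L₁ L₂ M₂, L = L₁ ++ L₂ ∧ M = invRev L₂ ++ M₂ ∧ reduce (L ++ M) = L₁ ++ M₂ := by
  induction n with
  | zero =>
    intro L M hn hL hM
    have : L = [] := List.length_eq_zero_iff.1 (Nat.le_zero.1 hn)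
    subst this
    exact ⟨[], [], M, by simp, by simp [invRev], by simpa using hM⟩
  | succ n ih =>
    intro L M hn hL hM
    by_cases hc : Compat L M
    · exact ⟨L, [], M, by simp, by simp [invRev], reduce_append_of_compat hL hM hc⟩
    · simp only [Compat] at hc
      push_neg at hc
      obtain ⟨a, ha, b, hb, hab⟩ := hc
      simp only [NC, not_not] at hab
      obtain ⟨x, s⟩ := a
      have hbval : b = (x, !s) := by
        obtain ⟨b1, b2⟩ := b
        obtain ⟨h1, h2⟩ := hab
        simp only at h1 h2
        subst h1
        cases b2 <;> simp_all
      subst hbval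
      rcases List.eq_nil_or_concat' L with rfl | ⟨L', a', rfl⟩
      · simp at ha
      have ha' : a' = (x, s) := by simpa using ha
      subst ha'
      rcases M with _ | ⟨b', M'⟩
      · simp at hb
      have hb' : b' = (x, !s) := by simpa using hb
      subst hb' 
      have hstep : Red.Step (L' ++ (x, s) :: (x, !s) :: M') (L' ++ M') := Red.Step.not
      have hre : reduce ((L' ++ [(x, s)]) ++ (x, !s) :: M') = reduce (L' ++ M') := by
        have : (L' ++ [(x, s)]) ++ (x, !s) :: M' = L' ++ (x, s) :: (x, !s) :: M' := by simp
        rw [this]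
        exact reduce.Step.eq hstep
      have hL' : reduce L' = L' := reduce_infix hL ⟨[], [(x, s)], by simp⟩
      have hM' : reduce M' = M' := reduce_infix hM ⟨[(x, !s)], [], by simp⟩
      have hlen : L'.length ≤ n := by
        have := hn
        simp at this
        omega
      obtain ⟨L₁, L₂', M₂, hd1, hd2, hd3⟩ := ih L' M' hlen hL' hM'
      refine ⟨L₁, L₂' ++ [(x, s)], M₂, ?_, ?_, ?_⟩
      · rw [hd1]; simp
      · rw [invRev_append, invRev_singleton]
        simp [hd2]
      · rw [hre, hd3]

lemma toWord_mul (x y : FreeGroup α) :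
    (x * y).toWord = reduce (x.toWord ++ y.toWord) := by
  conv_lhs => rw [← mk_toWord (x := x), ← mk_toWord (x := y)]
  rw [mul_mk, toWord_mk]

/-- decomposition of a square -/
lemma sq_decomp {x : FreeGroup α} (h2 : x * x ≠ 1) :
    (x * x).toWord.head? = x.toWord.head? ∧
    (x * x).toWord.getLast? = x.toWord.getLast? := by
  set X := x.toWord with hX
  have hred : reduce X = X := reduce_toWord x
  obtain ⟨L₁, L₂, M₂, h1, h2', h3⟩ :=
    reduce_append_decomp X.length X X le_rfl hred hred
  have hmul : (x * x).toWord = L₁ ++ M₂ := by rw [toWord_mul, ← hX, h3]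
  have hlen : X.length = L₁.length + L₂.length := by rw [h1]; simp
  have hlen2 : X.length = L₂.length + M₂.length := by
    rw [h2']; simp [invRev_length]
  have hL₁ : L₁ ≠ [] := by
    intro hnil
    subst hnil
    simp at hlen
    have : M₂ = [] := by
      rw [← List.length_eq_zero_iff]
      omega
    subst this
    apply h2
    rw [← toWord_eq_nil_iff, hmul]
    rfl
  have hM₂ : M₂ ≠ [] := by
    intro hnil
    subst hnil
    simp at hlen2
    have : L₁ = [] := by
      rw [← List.length_eq_zero_iff]
      omega
    exact hL₁ this
  constructor
  · rw [hmul, h1]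
    rw [List.head?_append_of_ne_nil _ hL₁, List.head?_append_of_ne_nil _ hL₁]
  · rw [hmul, h2']
    rw [List.getLast?_append_of_ne_nil _ hM₂, List.getLast?_append_of_ne_nil _ hM₂]

/-- if head cancels last, peel off a conjugating letter -/
lemma conj_decomp {x : FreeGroup α} {t : α} {s : Bool}
    (hh : x.toWord.head? = some (t, s)) (hl : x.toWord.getLast? = some (t, !s)) :
    ∃ y : FreeGroup α,
      x = FreeGroup.mk [(t, s)] * y * (FreeGroup.mk [(t, s)])⁻¹ ∧ y.norm + 2 = x.norm := by
  set X := x.toWord with hX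
  have hred : reduce X = X := reduce_toWord x
  rcases hX' : X with _ | ⟨a, T⟩
  · rw [hX'] at hh; simp at hh
  have ha : a = (t, s) := by rw [hX'] at hh; simpa using hh
  subst ha
  have hT : T ≠ [] := by
    intro hnil
    rw [hX', hnil] at hl
    simp at hl
  obtain ⟨mid, z, hTz⟩ := T.eq_nil_or_concat.resolve_left hT
  have hz : z = (t, !s) := by
    rw [hX', hTz, List.concat_eq_append, ← List.cons_append, List.getLast?_concat] at hl
    exact Option.some_injective _ hl
  subst hz
  have hXfull : X = [(t, s)] ++ mid ++ [(t, !s)] := by rw [hX', hTz]; simp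
  have hmid : reduce mid = mid :=
    reduce_infix hred ⟨[(t, s)], [(t, !s)], by rw [hXfull]⟩
  refine ⟨FreeGroup.mk mid, ?_, ?_⟩
  · have : x = FreeGroup.mk X := (mk_toWord).symm
    rw [this, hXfull, inv_mk, invRev_singleton, mul_mk, mul_mk]
  · have h1 : (FreeGroup.mk mid).norm = mid.length := by
      show (FreeGroup.mk mid).toWord.length = _
      rw [toWord_mk, hmid]
    have h2 : x.norm = X.length := rfl
    rw [h1, h2, hXfull]
    simp

lemma not_compat_self {x : FreeGroup α} (h : ¬ Compat x.toWord x.toWord) :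
    ∃ t s, x.toWord.head? = some (t, s) ∧ x.toWord.getLast? = some (t, !s) := by
  simp only [Compat] at h
  push_neg at h
  obtain ⟨a, ha, b, hb, hab⟩ := h
  simp only [NC, not_not] at hab
  refine ⟨a.1, b.2, ?_, ?_⟩
  · have hb' : x.toWord.head? = some b := Option.mem_def.1 hb
    rw [hb']
    obtain ⟨b1, b2⟩ := b
    have : b1 = a.1 := hab.1.symm
    simp [this]
  · have ha' : x.toWord.getLast? = some a := Option.mem_def.1 ha
    rw [ha']
    obtain ⟨a1, a2⟩ := a
    have : a2 = !b.2 := by simpa using hab.2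
    simp [this]


lemma eq_one_of_sq_eq_one_aux (n : ℕ) :
    ∀ x : FreeGroup α, x.norm ≤ n → x * x = 1 → x = 1 := by
  induction n with
  | zero =>
    intro x hx _
    exact norm_eq_zero.1 (Nat.le_zero.1 hx)
  | succ n ih =>
    intro x hx hsq
    by_cases hc : Compat x.toWord x.toWord
    · have hXX : (x * x).toWord = x.toWord ++ x.toWord := by
        rw [toWord_mul, reduce_append_of_compat (reduce_toWord x) (reduce_toWord x) hc]
      rw [hsq, toWord_one] at hXX
      rcases List.append_eq_nil_iff.mp hXX.symm with ⟨h1, _⟩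
      exact toWord_eq_nil_iff.1 h1
    · obtain ⟨t, s, hh, hl⟩ := not_compat_self hc
      obtain ⟨y, hy, hnorm⟩ := conj_decomp hh hl
      set g := FreeGroup.mk [(t, s)] with hg
      have hyy : y * y = 1 := by
        have h' : g * (y * y) * g⁻¹ = 1 := by rw [← hsq, hy]; group
        calc y * y = g⁻¹ * (g * (y * y) * g⁻¹) * g := by group
        _ = g⁻¹ * 1 * g := by rw [h']
        _ = 1 := by group
      have hylt : y.norm ≤ n := by omega
      have : y = 1 := ih y hylt hyy
      rw [hy, this]
      group

lemma eq_one_of_sq_eq_one (x : FreeGroup α) (h : x * x = 1) : x = 1 :=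
  eq_one_of_sq_eq_one_aux x.norm x le_rfl h

lemma sq_injective_aux (n : ℕ) :
    ∀ x y : FreeGroup α, x.norm + y.norm ≤ n → x * x = y * y → x = y := by
  induction n with
  | zero =>
    intro x y hn _
    have hx : x = 1 := norm_eq_zero.1 (by omega)
    have hy : y = 1 := norm_eq_zero.1 (by omega)
    rw [hx, hy]
  | succ n ih =>
    intro x y hn hsq
    by_cases hx1 : x = 1
    · subst hx1
      exact (eq_one_of_sq_eq_one y (by rw [← hsq]; simp)).symm
    by_cases hy1 : y = 1
    · subst hy1
      exact eq_one_of_sq_eq_one x (by rw [hsq]; simp)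
    have hxx : x * x ≠ 1 := fun h => hx1 (eq_one_of_sq_eq_one x h)
    have hyy : y * y ≠ 1 := fun h => hy1 (eq_one_of_sq_eq_one y h)
    obtain ⟨hhx, hlx⟩ := sq_decomp hxx
    obtain ⟨hhy, hly⟩ := sq_decomp hyy
    have hhead : x.toWord.head? = y.toWord.head? := by
      rw [← hhx, ← hhy, hsq]
    have hlast : x.toWord.getLast? = y.toWord.getLast? := by
      rw [← hlx, ← hly, hsq]
    by_cases hc : Compat x.toWord x.toWord
    · have hcy : Compat y.toWord y.toWord := by
        intro a ha b hb
        rw [← hlast] at ha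
        rw [← hhead] at hb
        exact hc a ha b hb
      have hXX : (x * x).toWord = x.toWord ++ x.toWord := by
        rw [toWord_mul, reduce_append_of_compat (reduce_toWord x) (reduce_toWord x) hc]
      have hYY : (y * y).toWord = y.toWord ++ y.toWord := by
        rw [toWord_mul, reduce_append_of_compat (reduce_toWord y) (reduce_toWord y) hcy]
      have heq : x.toWord ++ x.toWord = y.toWord ++ y.toWord := by
        rw [← hXX, ← hYY, hsq]
      have hlen : x.toWord.length = y.toWord.length := by
        have := congrArg List.length heq
        simp at this
        omega
      exact toWord_injective ((List.append_inj heq hlen).1)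
    · obtain ⟨t, s, hh, hl⟩ := not_compat_self hc
      obtain ⟨x', hx', hnx⟩ := conj_decomp hh hl
      obtain ⟨y', hy', hny⟩ := conj_decomp (hhead ▸ hh) (hlast ▸ hl)
      set g := FreeGroup.mk [(t, s)] with hg
      have hsq' : x' * x' = y' * y' := by
        have h1 : g * (x' * x') * g⁻¹ = g * (y' * y') * g⁻¹ := by
          calc g * (x' * x') * g⁻¹ = x * x := by rw [hx']; group
          _ = y * y := hsq
          _ = g * (y' * y') * g⁻¹ := by rw [hy']; group
        calc x' * x' = g⁻¹ * (g * (x' * x') * g⁻¹) * g := by group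
        _ = g⁻¹ * (g * (y' * y') * g⁻¹) * g := by rw [h1]
        _ = y' * y' := by group
      have : x' = y' := ih x' y' (by omega) hsq'
      rw [hx', hy', this]

lemma sq_injective (x y : FreeGroup α) (h : x * x = y * y) : x = y :=
  sq_injective_aux (x.norm + y.norm) x y le_rfl h

end FreeGroupSqAux

theorem commute_of_power_identity {α : Type*}
    (c d : FreeGroup α) (n m : ℤ)
    (h : (d * c) ^ n * d = (c * d) ^ m * c) :
    c * d = d * c := by
  letI := Classical.decEq α
  set u := d * c with hu
  have hsemi : SemiconjBy c u (c * d) := by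
    show c * u = (c * d) * c
    rw [hu, mul_assoc]
  have hsc : c * u ^ m = (c * d) ^ m * c := hsemi.zpow_right m
  have hw : u ^ n * d = c * u ^ m := by rw [h, hsc]
  have hww : (u ^ n * d) * (u ^ n * d) = u ^ (n + 1 + m) := by
    nth_rewrite 2 [hw]
    calc u ^ n * d * (c * u ^ m) = u ^ n * (d * c) * u ^ m := by group
    _ = u ^ n * u ^ (1 : ℤ) * u ^ m := by rw [← hu, zpow_one]
    _ = u ^ (n + 1 + m) := by group
  set w := u ^ n * d with hwdef
  have hconj : (u * w * u⁻¹) * (u * w * u⁻¹) = w * w := by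
    calc (u * w * u⁻¹) * (u * w * u⁻¹) = u * (w * w) * u⁻¹ := by group
    _ = u * u ^ (n + 1 + m) * u⁻¹ := by rw [hww]
    _ = u ^ (n + 1 + m) := by group
    _ = w * w := hww.symm
  have hfix : u * w * u⁻¹ = w := FreeGroupSqAux.sq_injective _ _ hconj
  have hcomm : u * w = w * u := by
    calc u * w = (u * w * u⁻¹) * u := by group
    _ = w * u := by rw [hfix]
  have hud : u * d = d * u := by
    have h3 : u ^ n * (u * d) = u ^ n * (d * u) := by
      calc u ^ n * (u * d) = u * (u ^ n * d) := by group
      _ = (u ^ n * d) * u := hcomm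
      _ = u ^ n * (d * u) := by group
    exact mul_left_cancel h3
  have final : d * (c * d) = d * u := by
    calc d * (c * d) = (d * c) * d := by rw [mul_assoc]
    _ = u * d := by rw [hu]
    _ = d * u := hud
  have := mul_left_cancel final
  rw [this]
end

section
/- In a free group, if u and v are nontrivial elements such that u * v = v * u, then there exists an element w and integers m, n with u = w^m and v = w^n. -/
private lemma freeGroup_of_comm_eq {ι : Type*} {a b : ι}
    (h : FreeGroup.of a * FreeGroup.of b = FreeGroup.of b * FreeGroup.of a) : a = b := by
  classical
  by_contra hab
  let f : ι → Equiv.Perm (Fin 3) := fun i => if i = a then Equiv.swap 0 1 else Equiv.swap 1 2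
  have := congrArg (FreeGroup.lift f) h
  simp only [map_mul, FreeGroup.lift_apply_of] at this
  have ha : f a = Equiv.swap 0 1 := if_pos rfl
  have hb : f b = Equiv.swap 1 2 := if_neg (Ne.symm hab)
  rw [ha, hb] at this
  exact absurd this (by decide)

private lemma freeGroupUnit_zpow (x : FreeGroup Unit) :
    ∃ n : ℤ, x = FreeGroup.of () ^ n :=
  ⟨FreeGroup.freeGroupUnitEquivInt x, (FreeGroup.freeGroupUnitEquivInt.left_inv x).symm⟩

theorem commuting_elements_common_root {α : Type*}
    (u v : FreeGroup α) (hu : u ≠ 1) (hv : v ≠ 1)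
    (h : u * v = v * u) :
    ∃ (w : FreeGroup α) (m n : ℤ), u = w ^ m ∧ v = w ^ n := by
  set S : Set (FreeGroup α) := {u, v} with hS
  have hcomm : ∀ x ∈ S, ∀ y ∈ S, x * y = y * x := by
    rintro x (rfl | rfl) y (rfl | rfl) <;> first | rfl | exact h | exact h.symm
  set H := Subgroup.closure S with hH
  have hcommH : ∀ x y : H, x * y = y * x := by
    letI : CommGroup H := Subgroup.closureCommGroupOfComm hcomm
    exact fun x y => mul_comm x y
  have huH : u ∈ H := Subgroup.subset_closure (by simp [hS])
  have hvH : v ∈ H := Subgroup.subset_closure (by simp [hS])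
  obtain ⟨ι, ⟨b⟩⟩ := (inferInstance : IsFreeGroup H).nonempty_basis
  -- ι is a subsingleton
  haveI hsub : Subsingleton ι := by
    constructor
    intro i j
    apply freeGroup_of_comm_eq (a := i) (b := j)
    have := hcommH (b.repr.symm (FreeGroup.of i)) (b.repr.symm (FreeGroup.of j))
    have := congrArg b.repr this
    simpa using this
  -- ι is nonempty
  haveI hne : Nonempty ι := by
    by_contra hempty
    haveI : IsEmpty ι := not_nonempty_iff.mp hempty
    have hone : ∀ z : FreeGroup ι, z = 1 := by
      have hid : (MonoidHom.id (FreeGroup ι)) = 1 := FreeGroup.ext_hom _ _ (fun i => isEmptyElim i)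
      intro z
      have := DFunLike.congr_fun hid z
      simpa using this
    have : (⟨u, huH⟩ : H) = (1 : H) := by
      apply b.repr.injective
      rw [map_one]
      exact hone _
    exact hu (congrArg Subtype.val this)
  haveI : Unique ι := uniqueOfSubsingleton (Classical.arbitrary ι)
  let e : H ≃* FreeGroup Unit := b.repr.trans (FreeGroup.freeGroupCongr (Equiv.ofUnique ι Unit))
  set w : H := e.symm (FreeGroup.of ()) with hw
  obtain ⟨m, hm⟩ := freeGroupUnit_zpow (e ⟨u, huH⟩)
  obtain ⟨n, hn⟩ := freeGroupUnit_zpow (e ⟨v, hvH⟩)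
  refine ⟨(w : FreeGroup α), m, n, ?_, ?_⟩
  · have : (⟨u, huH⟩ : H) = w ^ m := by
      apply e.injective; rw [hm, map_zpow, hw]; simp
    have := congrArg Subtype.val this
    simpa using this
  · have : (⟨v, hvH⟩ : H) = w ^ n := by
      apply e.injective; rw [hn, map_zpow, hw]; simp
    have := congrArg Subtype.val this
    simpa using this
end
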